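/- Let M₁, M₂ be von Neumann algebras with M₁ a factor, and let p ∈ M₁ be a nonzero projection. Then the set (p ⊗ M₂) ∪ (M₁ ⊗ 1) generates M₁ ⊗ M₂ as a von Neumann algebra. -/

import Mathlib

open scoped ComplexConjugate

/-- If a continuous linear map sends a generating set into the span, it preserves the
topological closure of the span. -/
lemma aux_closure_inv {H : Type*} [NormedAddCommGroup H] [InnerProductSpace ℂ H]
    {g : Set H} {f : H →L[ℂ] H}
    (h : ∀ w ∈ g, f w ∈ Submodule.span ℂ g) :
    ∀ v ∈ (Submodule.span ℂ g).topologicalClosure,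
      f v ∈ (Submodule.span ℂ g).topologicalClosure := by
  intro v hv
  have h1 : Submodule.span ℂ g ≤
      ((Submodule.span ℂ g).topologicalClosure).comap (f : H →ₗ[ℂ] H) := by
    rw [Submodule.span_le]
    intro w hw
    exact Submodule.le_topologicalClosure _ (h w hw)
  have h2 : IsClosed ((((Submodule.span ℂ g).topologicalClosure).comap
      (f : H →ₗ[ℂ] H) : Submodule ℂ H) : Set H) :=
    IsClosed.preimage f.continuous (Submodule.isClosed_topologicalClosure _)
  exact Submodule.topologicalClosure_minimal _ h1 h2 hv

/-- If a closed subspace is invariant under `y` and `star y`, then `y` commutes with the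
orthogonal projection onto it. -/
lemma aux_commute_proj {H : Type*} [NormedAddCommGroup H] [InnerProductSpace ℂ H]
    [CompleteSpace H] (V : Submodule ℂ H) [CompleteSpace V] {y : H →L[ℂ] H}
    (h1 : ∀ v ∈ V, y v ∈ V) (h2 : ∀ v ∈ V, (star y) v ∈ V) :
    y * (V.subtypeL.comp (V.orthogonalProjectionOnto)) =
      (V.subtypeL.comp (V.orthogonalProjectionOnto)) * y := by
  ext v
  have key : (V.orthogonalProjectionOnto (y v) : H) = y (V.orthogonalProjectionOnto v) := by
    apply Submodule.eq_starProjection_of_mem_orthogonal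
      (h1 _ (V.orthogonalProjectionOnto v).2)
    have hperp : v - V.orthogonalProjectionOnto v ∈ Vᗮ :=
      V.sub_starProjection_mem_orthogonal v
    rw [Submodule.mem_orthogonal]
    intro u hu
    rw [← map_sub]
    have hadj := ContinuousLinearMap.adjoint_inner_left y
      (v - (V.orthogonalProjectionOnto v : H)) u
    rw [← hadj]
    have hmem : (ContinuousLinearMap.adjoint y) u ∈ V := by
      rw [← ContinuousLinearMap.star_eq_adjoint]; exact h2 u hu
    exact (Submodule.mem_orthogonal V _).mp hperp _ hmem
  simp only [ContinuousLinearMap.mul_apply, ContinuousLinearMap.coe_comp',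
    Function.comp_apply, Submodule.subtypeL_apply]
  exact key.symm

/-- Let `M₁, M₂` be von Neumann algebras with `M₁` a factor, and let
`p ∈ M₁` be a nonzero projection. Then `(p ⊗ M₂) ∪ (M₁ ⊗ 1)` generates `M₁ ⊗ M₂` as a von
Neumann algebra.

We formalize the von Neumann tensor product by realizing `M₁` and `M₂` as pointwise
commuting von Neumann subalgebras of `B(H)` (so `x ⊗ y` corresponds to `x * y`, `p ⊗ z`
to `p * z`, and `M₁ ⊗ M₂` to the von Neumann algebra generated by `M₁ ∪ M₂`, i.e. the
double commutant `(M₁ ∪ M₂)''`). The conclusion is that the double commutant of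
`{p * z | z ∈ M₂} ∪ M₁` contains `M₁ ∪ M₂`, hence contains (so equals) `(M₁ ∪ M₂)''`. -/
theorem factor_corner_tensor_generates
    {H : Type*} [NormedAddCommGroup H] [InnerProductSpace ℂ H] [CompleteSpace H]
    (M₁ M₂ : VonNeumannAlgebra H)
    (hcomm : ∀ x ∈ M₁, ∀ y ∈ M₂, x * y = y * x)
    (hfactor : ∀ x ∈ M₁, (∀ y ∈ M₁, x * y = y * x) → ∃ c : ℂ, x = c • (1 : H →L[ℂ] H))
    (p : H →L[ℂ] H) (hpM : p ∈ M₁) (hpsa : IsSelfAdjoint p) (hpidem : p * p = p)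
    (hp0 : p ≠ 0) :
    (M₁ : Set (H →L[ℂ] H)) ∪ (M₂ : Set (H →L[ℂ] H)) ⊆
      Set.centralizer (Set.centralizer
        (((fun z => p * z) '' (M₂ : Set (H →L[ℂ] H))) ∪ (M₁ : Set (H →L[ℂ] H)))) := by
  rintro x (hx | hx)
  · exact Set.subset_centralizer_centralizer (Or.inr hx)
  · rw [Set.mem_centralizer_iff]
    intro y hy
    rw [Set.mem_centralizer_iff] at hy
    have hyM₁ : ∀ a ∈ M₁, a * y = y * a := fun a ha => hy a (Or.inr ha)
    have hypz : ∀ w ∈ M₂, (p * w) * y = y * (p * w) :=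
      fun w hw => hy (p * w) (Or.inl ⟨w, hw, rfl⟩)
    set T : H →L[ℂ] H := y * x - x * y with hT
    -- `T` annihilates `a * p` for every `a ∈ M₁`
    have key : ∀ a ∈ M₁, T * (a * p) = 0 := by
      intro a ha
      have h1 : x * a = a * x := (hcomm a ha x hx).symm
      have h2 : x * p = p * x := (hcomm p hpM x hx).symm
      have h3 : y * a = a * y := (hyM₁ a ha).symm
      have h4 : y * p = p * y := (hyM₁ p hpM).symm
      have h5 : (p * x) * y = y * (p * x) := hypz x hx
      have e1 : y * (x * (a * p)) = a * (p * x * y) := by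
        rw [show x * (a * p) = a * (x * p) by rw [← mul_assoc, h1, mul_assoc], h2]
        rw [show y * (a * (p * x)) = a * (y * (p * x)) by
          rw [← mul_assoc, h3, mul_assoc]]
        rw [← h5]
      have e2 : x * (y * (a * p)) = a * (p * x * y) := by
        rw [show y * (a * p) = a * (y * p) by rw [← mul_assoc, h3, mul_assoc], h4]
        rw [show x * (a * (p * y)) = a * (x * (p * y)) by
          rw [← mul_assoc, h1, mul_assoc]]
        rw [show x * (p * y) = p * x * y by rw [← mul_assoc, h2]]
      calc T * (a * p) = y * (x * (a * p)) - x * (y * (a * p)) := by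
            rw [hT, sub_mul, mul_assoc, mul_assoc]
        _ = 0 := by rw [e1, e2, sub_self]
    have keyv : ∀ a ∈ M₁, ∀ ξ : H, T (a (p ξ)) = 0 := by
      intro a ha ξ
      have h := ContinuousLinearMap.ext_iff.mp (key a ha) ξ
      simpa [ContinuousLinearMap.mul_apply] using h
    -- the closed span of `{a (p ξ)}`
    set g : Set H := {w : H | ∃ a ∈ (M₁ : Set (H →L[ℂ] H)), ∃ ξ : H, a (p ξ) = w} with hg
    set V : Submodule ℂ H := (Submodule.span ℂ g).topologicalClosure with hV
    haveI : CompleteSpace V :=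
      (Submodule.isClosed_topologicalClosure _).completeSpace_coe
    -- invariance of V under M₁
    have hinvM₁ : ∀ a ∈ M₁, ∀ v ∈ V, a v ∈ V := by
      intro a ha
      apply aux_closure_inv
      rintro w ⟨b, hb, ξ, rfl⟩
      exact Submodule.subset_span ⟨a * b, mul_mem ha hb, ξ, rfl⟩
    -- invariance of V under the commutant of M₁
    have hinvC : ∀ m ∈ Set.centralizer (M₁ : Set (H →L[ℂ] H)), ∀ v ∈ V, m v ∈ V := by
      intro m hm
      apply aux_closure_inv
      rintro w ⟨b, hb, ξ, rfl⟩
      refine Submodule.subset_span ⟨b, hb, m ξ, ?_⟩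
      have hop : (b * p) * m = m * (b * p) := hm (b * p) (mul_mem hb hpM)
      exact ContinuousLinearMap.ext_iff.mp hop ξ
    -- the commutant of M₁ is star-closed
    have hstar : ∀ m ∈ Set.centralizer (M₁ : Set (H →L[ℂ] H)),
        star m ∈ Set.centralizer (M₁ : Set (H →L[ℂ] H)) := by
      intro m hm a ha
      have h := hm (star a) (star_mem ha)
      calc a * star m = star (m * star a) := by rw [star_mul, star_star]
        _ = star (star a * m) := by rw [h]
        _ = star m * a := by rw [star_mul, star_star]
    set Q : H →L[ℂ] H := V.subtypeL.comp (V.orthogonalProjectionOnto) with hQ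
    have hQmemcc : Q ∈ Set.centralizer (Set.centralizer (M₁ : Set (H →L[ℂ] H))) := by
      intro m hm
      exact aux_commute_proj V (hinvC m hm) (hinvC (star m) (hstar m hm))
    have hQM₁ : Q ∈ (M₁ : Set (H →L[ℂ] H)) := by
      rw [← M₁.centralizer_centralizer]; exact hQmemcc
    have hQcomm : ∀ a ∈ M₁, Q * a = a * Q := by
      intro a ha
      exact (aux_commute_proj V (hinvM₁ a ha) (hinvM₁ (star a) (star_mem ha))).symm
    obtain ⟨c, hc⟩ := hfactor Q hQM₁ hQcomm
    obtain ⟨ξ₀, hξ₀⟩ : ∃ ξ, p ξ ≠ 0 := by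
      by_contra hcon
      push_neg at hcon
      exact hp0 (ContinuousLinearMap.ext fun ξ => by simpa using hcon ξ)
    have hmemV : p ξ₀ ∈ V :=
      Submodule.le_topologicalClosure _
        (Submodule.subset_span ⟨1, one_mem M₁, ξ₀, by simp⟩)
    have hQfix : Q (p ξ₀) = p ξ₀ := by
      have := Submodule.starProjection_eq_self_iff.mpr hmemV
      exact this
    have hc1 : c = 1 := by
      have hsm : c • (p ξ₀) = p ξ₀ := by
        have h := hQfix
        rw [hc] at h
        simpa using h
      have h2 : (c - 1) • (p ξ₀) = 0 := by
        rw [sub_smul, one_smul, hsm, sub_self]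
      rcases smul_eq_zero.mp h2 with h | h
      · exact sub_eq_zero.mp h
      · exact absurd h hξ₀
    have hQ1 : Q = 1 := by rw [hc, hc1, one_smul]
    have hVtop : ∀ v : H, v ∈ V := by
      intro v
      have hqv : Q v = v := by rw [hQ1]; rfl
      rw [← hqv]
      exact (V.orthogonalProjectionOnto v).2
    have hTzero : T = 0 := by
      have hsub : Submodule.span ℂ g ≤ LinearMap.ker (T : H →ₗ[ℂ] H) := by
        rw [Submodule.span_le]
        rintro w ⟨a, ha, ξ, rfl⟩
        exact keyv a ha ξ
      have hle : V ≤ LinearMap.ker (T : H →ₗ[ℂ] H) :=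
        Submodule.topologicalClosure_minimal _ hsub (ContinuousLinearMap.isClosed_ker T)
      ext v
      exact hle (hVtop v)
    exact sub_eq_zero.mp (hT ▸ hTzero)
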